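/- Suppose u(p,ξ) < ∞, and ξ(k) = a, ξ(k+1) = b with a ≠ b. Let ξ' be the sequence obtained from ξ by swapping the looks at positions k and k+1. Then u(p,ξ) − u(p,ξ') = t_a · p_b (1−q_b)^{N_b(ξ,k)} q_b − t_b · p_a (1−q_a)^{N_a(ξ,k)} q_a. In particular, u(p,ξ') ≤ u(p,ξ) if and only if p_b (1−q_b)^{N_b(ξ,k)} q_b / t_b ≥ p_a (1−q_a)^{N_a(ξ,k)} q_a / t_a. -/
import Mathlib


open scoped ENNReal

/-- `looks ξ j k` = number of looks in box `j` among the first `k` looks of `ξ`. -/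
def looks {n : ℕ} (ξ : ℕ → Fin n) (j : Fin n) (k : ℕ) : ℕ :=
  ((Finset.range k).filter (fun i => ξ i = j)).card

/-- Expected search time (in `[0,∞]`) to find a target hidden in box `j`, when the boxes
have search times `t` and detection probabilities `q`, and the Searcher uses the
sequence `ξ`. -/
noncomputable def searchTime {n : ℕ} (t q : Fin n → ℝ) (j : Fin n) (ξ : ℕ → Fin n) : ℝ≥0∞ :=
  ∑' k : ℕ, ENNReal.ofReal (t (ξ k) * (1 - q j) ^ looks ξ j k)

/-- Expected search time against the mixed Hider strategy `p`. -/
noncomputable def mixedSearchTime {n : ℕ} (t q : Fin n → ℝ) (p : Fin n → ℝ)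
    (ξ : ℕ → Fin n) : ℝ≥0∞ :=
  ∑ j : Fin n, ENNReal.ofReal (p j) * searchTime t q j ξ

/-- exchange argument. If `u(p,ξ) < ∞` and `ξ` looks in box `a` at position
`k` and in box `b ≠ a` at position `k+1`, then swapping these two looks changes the
expected search time by
`u(p,ξ) − u(p,ξ') = t_a·p_b(1−q_b)^{N_b(ξ,k)}q_b − t_b·p_a(1−q_a)^{N_a(ξ,k)}q_a`;
in particular `u(p,ξ') ≤ u(p,ξ)` iff
`p_b(1−q_b)^{N_b(ξ,k)}q_b/t_b ≥ p_a(1−q_a)^{N_a(ξ,k)}q_a/t_a`. -/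
theorem swap_adjacent_looks
    {n : ℕ} (t q : Fin n → ℝ) (ht : ∀ j, 0 < t j) (hq0 : ∀ j, 0 < q j) (hq1 : ∀ j, q j ≤ 1)
    (p : Fin n → ℝ) (hp0 : ∀ j, 0 ≤ p j) (hp1 : ∑ j, p j = 1)
    (ξ : ℕ → Fin n) (hfin : mixedSearchTime t q p ξ < ⊤)
    (k : ℕ) (a b : Fin n) (hka : ξ k = a) (hkb : ξ (k + 1) = b) (hab : a ≠ b)
    (ξ' : ℕ → Fin n)
    (hξ' : ∀ i, ξ' i = if i = k then ξ (k + 1) else if i = k + 1 then ξ k else ξ i) :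
    (mixedSearchTime t q p ξ).toReal - (mixedSearchTime t q p ξ').toReal =
        t a * (p b * (1 - q b) ^ looks ξ b k * q b) -
          t b * (p a * (1 - q a) ^ looks ξ a k * q a) ∧
      (mixedSearchTime t q p ξ' ≤ mixedSearchTime t q p ξ ↔
        p a * (1 - q a) ^ looks ξ a k * q a / t a ≤
          p b * (1 - q b) ^ looks ξ b k * q b / t b) := by
  
  -- basic positivity facts
  have hr0 : ∀ j : Fin n, 0 ≤ 1 - q j := fun j => by linarith [hq1 j]
  have hx : ∀ (i j : Fin n) (m : ℕ), 0 ≤ t i * (1 - q j) ^ m :=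
    fun i j m => mul_nonneg (ht i).le (pow_nonneg (hr0 j) m)
  -- step lemma for looks
  have hstep : ∀ (ζ : ℕ → Fin n) (j : Fin n) (m : ℕ),
      looks ζ j (m + 1) = looks ζ j m + (if ζ m = j then 1 else 0) := by
    intro ζ j m
    unfold looks
    rw [Finset.range_add_one, Finset.filter_insert]
    by_cases h : ζ m = j
    · rw [if_pos h, if_pos h, Finset.card_insert_of_notMem (by simp)]
    · rw [if_neg h, if_neg h, add_zero]
  have e1 : ξ' k = b := by rw [hξ' k, if_pos rfl, hkb]
  have e2 : ξ' (k + 1) = a := by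
    rw [hξ' (k + 1), if_neg (by omega), if_pos rfl, hka]
  -- looks agree below k
  have hle : ∀ (j : Fin n) (m : ℕ), m ≤ k → looks ξ' j m = looks ξ j m := by
    intro j m hm
    unfold looks
    congr 1
    apply Finset.filter_congr
    intro i hi
    simp only [Finset.mem_range] at hi
    rw [hξ' i, if_neg (by omega), if_neg (by omega)]
  -- looks agree from k+2 on
  have hge : ∀ (j : Fin n) (m : ℕ), k + 2 ≤ m → looks ξ' j m = looks ξ j m := by
    intro j m hm
    induction m, hm using Nat.le_induction with
    | base =>
      rw [show k + 2 = (k + 1) + 1 from rfl, hstep ξ' j (k + 1), hstep ξ j (k + 1),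
        hstep ξ' j k, hstep ξ j k, hle j k le_rfl, e1, e2, hka, hkb]
      ring
    | succ m hm ih =>
      have em : ξ' m = ξ m := by rw [hξ' m, if_neg (by omega), if_neg (by omega)]
      rw [hstep ξ' j m, hstep ξ j m, ih, em]
  -- summands agree away from k, k+1
  have hgg : ∀ (j : Fin n) (i : ℕ), i ≠ k → i ≠ k + 1 →
      t (ξ' i) * (1 - q j) ^ looks ξ' j i = t (ξ i) * (1 - q j) ^ looks ξ j i := by
    intro j i h1 h2
    have e : ξ' i = ξ i := by rw [hξ' i, if_neg h1, if_neg h2]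
    rcases lt_or_ge i k with h | h
    · rw [e, hle j i h.le]
    · rw [e, hge j i (by omega)]
  -- splitting a tsum at k and k+1
  have hsplit : ∀ F : ℕ → ℝ≥0∞, ∑' i, F i =
      F k + (F (k + 1) + ∑' i, if i = k then 0 else if i = k + 1 then 0 else F i) := by
    intro F
    rw [ENNReal.tsum_eq_add_tsum_ite k]
    congr 1
    rw [ENNReal.tsum_eq_add_tsum_ite (k + 1)]
    congr 1
    · simp
    · exact tsum_congr fun i => by split_ifs <;> rfl
  -- the key per-box exchange identity
  have key : ∀ j : Fin n,
      searchTime t q j ξ +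
          (ENNReal.ofReal (t b * (1 - q j) ^ looks ξ j k) +
            ENNReal.ofReal (t a * (1 - q j) ^ looks ξ' j (k + 1))) =
        searchTime t q j ξ' +
          (ENNReal.ofReal (t a * (1 - q j) ^ looks ξ j k) +
            ENNReal.ofReal (t b * (1 - q j) ^ looks ξ j (k + 1))) := by
    intro j
    unfold searchTime
    rw [hsplit fun i => ENNReal.ofReal (t (ξ i) * (1 - q j) ^ looks ξ j i),
      hsplit fun i => ENNReal.ofReal (t (ξ' i) * (1 - q j) ^ looks ξ' j i)]
    have hR : (∑' i, if i = k then 0 else if i = k + 1 then 0 else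
          ENNReal.ofReal (t (ξ' i) * (1 - q j) ^ looks ξ' j i)) =
        ∑' i, if i = k then 0 else if i = k + 1 then 0 else
          ENNReal.ofReal (t (ξ i) * (1 - q j) ^ looks ξ j i) := by
      refine tsum_congr fun i => ?_
      split_ifs with h1 h2
      · rfl
      · rfl
      · rw [hgg j i h1 h2]
    rw [hR, hka, hkb, e1, e2, hle j k le_rfl]
    ring
  -- sum the key identity against p
  have main : mixedSearchTime t q p ξ +
        (∑ j : Fin n, ENNReal.ofReal (p j * (t b * (1 - q j) ^ looks ξ j k +
          t a * (1 - q j) ^ looks ξ' j (k + 1)))) =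
      mixedSearchTime t q p ξ' +
        (∑ j : Fin n, ENNReal.ofReal (p j * (t a * (1 - q j) ^ looks ξ j k +
          t b * (1 - q j) ^ looks ξ j (k + 1)))) := by
    unfold mixedSearchTime
    rw [← Finset.sum_add_distrib, ← Finset.sum_add_distrib]
    refine Finset.sum_congr rfl fun j _ => ?_
    rw [ENNReal.ofReal_mul (hp0 j), ENNReal.ofReal_mul (hp0 j),
      ENNReal.ofReal_add (hx b j _) (hx a j _), ENNReal.ofReal_add (hx a j _) (hx b j _),
      ← mul_add, ← mul_add, key j]
  have hCe' : (∑ j : Fin n, ENNReal.ofReal (p j * (t b * (1 - q j) ^ looks ξ j k +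
      t a * (1 - q j) ^ looks ξ' j (k + 1)))) ≠ ⊤ :=
    (ENNReal.sum_lt_top.2 fun j _ => ENNReal.ofReal_lt_top).ne
  have hCe : (∑ j : Fin n, ENNReal.ofReal (p j * (t a * (1 - q j) ^ looks ξ j k +
      t b * (1 - q j) ^ looks ξ j (k + 1)))) ≠ ⊤ :=
    (ENNReal.sum_lt_top.2 fun j _ => ENNReal.ofReal_lt_top).ne
  have hfin' : mixedSearchTime t q p ξ' < ⊤ := by
    calc mixedSearchTime t q p ξ' ≤ mixedSearchTime t q p ξ' +
          (∑ j : Fin n, ENNReal.ofReal (p j * (t a * (1 - q j) ^ looks ξ j k +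
            t b * (1 - q j) ^ looks ξ j (k + 1)))) := le_self_add
      _ = mixedSearchTime t q p ξ +
          (∑ j : Fin n, ENNReal.ofReal (p j * (t b * (1 - q j) ^ looks ξ j k +
            t a * (1 - q j) ^ looks ξ' j (k + 1)))) := main.symm
      _ < ⊤ := ENNReal.add_lt_top.mpr ⟨hfin, hCe'.lt_top⟩
  -- nonnegativity of the correction summands
  have hnn : ∀ (i i' j : Fin n) (m m' : ℕ),
      0 ≤ p j * (t i * (1 - q j) ^ m + t i' * (1 - q j) ^ m') :=
    fun i i' j m m' => mul_nonneg (hp0 j) (add_nonneg (hx i j m) (hx i' j m'))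
  -- pass to real numbers
  have hreal : (mixedSearchTime t q p ξ).toReal +
        (∑ j : Fin n, p j * (t b * (1 - q j) ^ looks ξ j k +
          t a * (1 - q j) ^ looks ξ' j (k + 1))) =
      (mixedSearchTime t q p ξ').toReal +
        (∑ j : Fin n, p j * (t a * (1 - q j) ^ looks ξ j k +
          t b * (1 - q j) ^ looks ξ j (k + 1))) := by
    have t1 := congrArg ENNReal.toReal main
    rw [ENNReal.toReal_add hfin.ne hCe', ENNReal.toReal_add hfin'.ne hCe,
      ENNReal.toReal_sum (fun j _ => ENNReal.ofReal_ne_top),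
      ENNReal.toReal_sum (fun j _ => ENNReal.ofReal_ne_top)] at t1
    simpa only [ENNReal.toReal_ofReal (hnn _ _ _ _ _)] using t1
  -- evaluate the looks at k+1
  have hl1 : ∀ j : Fin n, looks ξ j (k + 1) = looks ξ j k + (if a = j then 1 else 0) := by
    intro j; rw [hstep ξ j k, hka]
  have hl2 : ∀ j : Fin n, looks ξ' j (k + 1) = looks ξ j k + (if b = j then 1 else 0) := by
    intro j; rw [hstep ξ' j k, e1, hle j k le_rfl]
  -- the real difference of corrections
  have hC : (∑ j : Fin n, p j * (t a * (1 - q j) ^ looks ξ j k +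
        t b * (1 - q j) ^ looks ξ j (k + 1))) -
      (∑ j : Fin n, p j * (t b * (1 - q j) ^ looks ξ j k +
        t a * (1 - q j) ^ looks ξ' j (k + 1))) =
      t a * (p b * (1 - q b) ^ looks ξ b k * q b) -
        t b * (p a * (1 - q a) ^ looks ξ a k * q a) := by
    rw [← Finset.sum_sub_distrib]
    have hpt : ∀ j : Fin n,
        p j * (t a * (1 - q j) ^ looks ξ j k + t b * (1 - q j) ^ looks ξ j (k + 1)) -
          p j * (t b * (1 - q j) ^ looks ξ j k + t a * (1 - q j) ^ looks ξ' j (k + 1)) =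
        (if j = b then t a * (p b * (1 - q b) ^ looks ξ b k * q b) else 0) -
          (if j = a then t b * (p a * (1 - q a) ^ looks ξ a k * q a) else 0) := by
      intro j
      rw [hl1 j, hl2 j]
      by_cases hja : j = a
      · rw [hja, if_neg hab, if_neg (show ¬b = a from fun h => hab h.symm)]
        simp only [eq_self_iff_true, ite_true, add_zero, pow_succ]
        ring
      · by_cases hjb : j = b
        · rw [hjb, if_neg (show ¬a = b from hab),
            if_neg (show ¬b = a from fun h => hab h.symm)]
          simp only [eq_self_iff_true, ite_true, add_zero, pow_succ]
          ring
        · rw [if_neg hjb, if_neg hja, if_neg (show ¬a = j from fun h => hja h.symm),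
            if_neg (show ¬b = j from fun h => hjb h.symm)]
          simp only [add_zero]
          ring
    rw [Finset.sum_congr rfl fun j _ => hpt j, Finset.sum_sub_distrib,
      Finset.sum_ite_eq' Finset.univ b, Finset.sum_ite_eq' Finset.univ a,
      if_pos (Finset.mem_univ b), if_pos (Finset.mem_univ a)]
  have hdiff : (mixedSearchTime t q p ξ).toReal - (mixedSearchTime t q p ξ').toReal =
      t a * (p b * (1 - q b) ^ looks ξ b k * q b) -
        t b * (p a * (1 - q a) ^ looks ξ a k * q a) := by
    linarith [hreal, hC]
  refine ⟨hdiff, ?_⟩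
  rw [div_le_div_iff₀ (ht a) (ht b), ← ENNReal.toReal_le_toReal hfin'.ne hfin.ne]
  constructor <;> intro h <;> nlinarith [hdiff]
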